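/- Let D be a canonical DBM over n clocks, let i₀ : Fin (n+1) be a distinguished clock index (the observer clock δ), and let D' be any DBM with D i j ≤ D' i j for all i, j such that D' agrees with D on every entry of row i₀ and of column i₀ (∀ k, D' i₀ k = D i₀ k ∧ D' k i₀ = D k i₀). Then canonicalizing D' preserves the entire row and column of i₀: ∀ k, Canon(D') i₀ k = D i₀ k ∧ Canon(D') k i₀ = D k i₀. In particular, an extrapolation that never touches the constraints involving the observer clock, followed by canonicalization, keeps all bounds on the observer clock precise. -/

import Mathlib

/-- A DBM over `n` clocks: index `0` is the reference clock. -/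
abbrev DBM (n : ℕ) := Fin (n + 1) → Fin (n + 1) → WithTop ℝ

/-- A DBM is canonical if it satisfies the triangle inequality. -/
def Canonical {n : ℕ} (D : DBM n) : Prop :=
  ∀ i j k, D i j ≤ D i k + D k j

/-- Weight of the path `p 0, p 1, …, p m` in `D`, computed in `WithTop ℝ`. -/
def pathWeight {n : ℕ} (D : DBM n) (p : ℕ → Fin (n + 1)) (m : ℕ) : WithTop ℝ :=
  ∑ k ∈ Finset.range m, D (p k) (p (k + 1))

/-- Canonicalization: `Canon D i j` is the minimum weight over all paths from `i` to `j`
with at most `n + 1` edges (the minimum of a finite nonempty set in `WithTop ℝ`). -/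
noncomputable def Canon {n : ℕ} (D : DBM n) : DBM n := fun i j =>
  sInf {w | ∃ m p, 1 ≤ m ∧ m ≤ n + 1 ∧ p 0 = i ∧ p m = j ∧ w = pathWeight D p m}


lemma pathWeight_lower {n : ℕ} (D : DBM n) (hD : Canonical D) (p : ℕ → Fin (n + 1)) :
    ∀ m, 1 ≤ m → D (p 0) (p m) ≤ pathWeight D p m := by
  intro m
  induction m with
  | zero => omega
  | succ m ih =>
    intro _
    rcases Nat.eq_or_lt_of_le (Nat.one_le_iff_ne_zero.mpr (Nat.succ_ne_zero m)) with h | h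
    · obtain rfl : m = 0 := by omega
      simp [pathWeight]
    · have hm : 1 ≤ m := by omega
      calc D (p 0) (p (m + 1)) ≤ D (p 0) (p m) + D (p m) (p (m + 1)) := hD _ _ _
        _ ≤ pathWeight D p m + D (p m) (p (m + 1)) := add_le_add (ih hm) le_rfl
        _ = pathWeight D p (m + 1) := (Finset.sum_range_succ _ m).symm

lemma canon_eq_of_obs {n : ℕ} (D D' : DBM n) (hD : Canonical D)
    (hle : ∀ i j, D i j ≤ D' i j) (a b : Fin (n + 1)) (hab : D' a b = D a b) :
    Canon D' a b = D a b := by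
  apply le_antisymm
  · apply csInf_le
    · refine ⟨D a b, ?_⟩
      rintro w ⟨m, p, hm, -, h0, hmb, rfl⟩
      calc D a b = D (p 0) (p m) := by rw [h0, hmb]
        _ ≤ pathWeight D p m := pathWeight_lower D hD p m hm
        _ ≤ pathWeight D' p m := Finset.sum_le_sum fun k _ => hle _ _
    · exact ⟨1, fun t => if t = 0 then a else b, le_refl 1, by omega, by simp, by simp,
        by simp [pathWeight, hab]⟩
  · apply le_csInf
    · exact ⟨D' a b, 1, fun t => if t = 0 then a else b, le_refl 1, by omega, by simp, by simp,
        by simp [pathWeight]⟩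
    · rintro w ⟨m, p, hm, -, h0, hmb, rfl⟩
      calc D a b = D (p 0) (p m) := by rw [h0, hmb]
        _ ≤ pathWeight D p m := pathWeight_lower D hD p m hm
        _ ≤ pathWeight D' p m := Finset.sum_le_sum fun k _ => hle _ _

/-- if `D` is canonical, `D'` dominates `D` entrywise, and `D'` agrees
with `D` on the entire row and column of the observer clock `i₀`, then canonicalizing
`D'` preserves the whole row and column of `i₀`: the bounds on the observer clock stay
precise. -/
theorem canon_preserves_observer_row_col {n : ℕ} (D D' : DBM n) (hD : Canonical D)
    (i₀ : Fin (n + 1)) (hle : ∀ i j, D i j ≤ D' i j)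
    (hrowcol : ∀ k, D' i₀ k = D i₀ k ∧ D' k i₀ = D k i₀) :
    ∀ k, Canon D' i₀ k = D i₀ k ∧ Canon D' k i₀ = D k i₀ := by
  intro k
  exact ⟨canon_eq_of_obs D D' hD hle i₀ k (hrowcol k).1,
    canon_eq_of_obs D D' hD hle k i₀ (hrowcol k).2⟩
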